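/- arXiv:2202.07729 — 4 statements merged into one kernel-verified Lean document; each statement's English description precedes it below -/
import Mathlib

section
/- Let n ≥ 1, 0 < α < 1, M ≥ 0, and let B ⊂ ℝⁿ be the open unit ball. Suppose f : B → ℂ is differentiable with ‖Df(x)‖ ≤ M·(1 - |x|)^{α-1} for all x ∈ B. Then there is a constant C = C(n, α), independent of f and M, such that |f(x₀) - f(x₁)| ≤ C·M·|x₀ - x₁|^α for all x₀, x₁ ∈ B. -/
open Metric

open Set

/-- Radial estimate: integrating the gradient bound along the segment from `r • x` to `x`. -/
lemma radial_est {n : ℕ} {α M : ℝ} (hα0 : 0 < α) (hα1 : α < 1) (hM : 0 ≤ M)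
    (f : EuclideanSpace ℝ (Fin n) → ℂ)
    (hdiff : ∀ x ∈ ball (0 : EuclideanSpace ℝ (Fin n)) 1, DifferentiableAt ℝ f x)
    (hbound : ∀ x ∈ ball (0 : EuclideanSpace ℝ (Fin n)) 1,
      ‖fderiv ℝ f x‖ ≤ M * (1 - ‖x‖) ^ (α - 1))
    {x : EuclideanSpace ℝ (Fin n)} (hx : x ∈ ball (0 : EuclideanSpace ℝ (Fin n)) 1)
    {r : ℝ} (hr0 : 0 ≤ r) (hr1 : r ≤ 1) :
    ‖f x - f (r • x)‖ ≤ (M / α) * (1 - r) ^ α := by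
  have hxnorm : ‖x‖ < 1 := by simpa using hx
  have hxnn : (0:ℝ) ≤ ‖x‖ := norm_nonneg x
  -- membership of s • x in the ball for s ∈ [r,1]
  have hmem : ∀ s ∈ Icc r 1, s • x ∈ ball (0 : EuclideanSpace ℝ (Fin n)) 1 := by
    intro s hs
    have hs0 : 0 ≤ s := le_trans hr0 hs.1
    have : ‖s • x‖ = s * ‖x‖ := by
      rw [norm_smul, Real.norm_eq_abs, abs_of_nonneg hs0]
    rw [mem_ball_zero_iff, this]
    calc s * ‖x‖ ≤ 1 * ‖x‖ := by
          exact mul_le_mul_of_nonneg_right hs.2 hxnn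
      _ = ‖x‖ := one_mul _
      _ < 1 := hxnorm
  set g : ℝ → ℂ := fun s => f (s • x) - f (r • x) with hg_def
  have hgderiv : ∀ s ∈ Icc r 1, HasDerivAt g (fderiv ℝ f (s • x) x) s := by
    intro s hs
    have h1 : HasDerivAt (fun s : ℝ => s • x) x s := by
      simpa using (hasDerivAt_id s).smul_const x
    have h2 : HasDerivAt (fun s : ℝ => f (s • x)) (fderiv ℝ f (s • x) x) s := by
      exact ((hdiff _ (hmem s hs)).hasFDerivAt.comp_hasDerivAt s h1)
    simpa [hg_def] using h2.sub_const (f (r • x))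
  have hgc : ContinuousOn g (Icc r 1) := fun s hs =>
    ((hgderiv s hs).continuousAt).continuousWithinAt
  have hg' : ∀ s ∈ Ico r 1, HasDerivWithinAt g (fderiv ℝ f (s • x) x) (Ici s) s :=
    fun s hs => ((hgderiv s (Ico_subset_Icc_self hs)).hasDerivWithinAt)
  set B : ℝ → ℝ := fun s => (M / α) * ((1 - r) ^ α - (1 - s) ^ α) with hB_def
  have hBc : ContinuousOn B (Icc r 1) := by
    have : Continuous (fun s : ℝ => (1 - s) ^ α) :=
      (Real.continuous_rpow_const hα0.le).comp (continuous_const.sub continuous_id)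
    exact (continuous_const.mul (continuous_const.sub this)).continuousOn
  have hB' : ∀ s ∈ Ico r 1, HasDerivWithinAt B (M * (1 - s) ^ (α - 1)) (Ici s) s := by
    intro s hs
    have hs1 : s < 1 := hs.2
    have hne : (1 : ℝ) - s ≠ 0 := by linarith
    have h1 : HasDerivAt (fun s : ℝ => 1 - s) (-1) s := by
      have := (hasDerivAt_const s (1:ℝ)).sub (hasDerivAt_id s); rw [zero_sub] at this; exact this
    have h2 : HasDerivAt (fun s : ℝ => (1 - s) ^ α) ((-1) * α * (1 - s) ^ (α - 1)) s :=
      h1.rpow_const (Or.inl hne)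
    have h3 : HasDerivAt B ((M / α) * (0 - (-1) * α * (1 - s) ^ (α - 1))) s :=
      ((hasDerivAt_const s ((1 - r) ^ α)).sub h2).const_mul (M / α)
    have : (M / α) * (0 - (-1) * α * (1 - s) ^ (α - 1)) = M * (1 - s) ^ (α - 1) := by
      field_simp
      ring
    rw [this] at h3
    exact h3.hasDerivWithinAt
  have hbound' : ∀ s ∈ Ico r 1, ‖fderiv ℝ f (s • x) x‖ ≤ M * (1 - s) ^ (α - 1) := by
    intro s hs
    have hs0 : 0 ≤ s := le_trans hr0 hs.1
    have hs1 : s < 1 := hs.2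
    have hmem' := hmem s ⟨hs.1, hs1.le⟩
    have hsx : ‖s • x‖ = s * ‖x‖ := by
      rw [norm_smul, Real.norm_eq_abs, abs_of_nonneg hs0]
    have h1 : (0:ℝ) < 1 - s := by linarith
    have h2 : 1 - s ≤ 1 - ‖s • x‖ := by
      rw [hsx]; nlinarith [mul_le_mul_of_nonneg_left hxnorm.le hs0]
    have h3 : (1 - ‖s • x‖) ^ (α - 1) ≤ (1 - s) ^ (α - 1) :=
      Real.rpow_le_rpow_of_nonpos h1 h2 (by linarith)
    calc ‖fderiv ℝ f (s • x) x‖ ≤ ‖fderiv ℝ f (s • x)‖ * ‖x‖ :=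
          (fderiv ℝ f (s • x)).le_opNorm x
      _ ≤ ‖fderiv ℝ f (s • x)‖ * 1 :=
          mul_le_mul_of_nonneg_left hxnorm.le (norm_nonneg _)
      _ = ‖fderiv ℝ f (s • x)‖ := mul_one _
      _ ≤ M * (1 - ‖s • x‖) ^ (α - 1) := hbound _ hmem'
      _ ≤ M * (1 - s) ^ (α - 1) := mul_le_mul_of_nonneg_left h3 hM
  have hBa : ‖g r‖ ≤ B r := by
    simp [hg_def, hB_def]
  have key := image_norm_le_of_norm_deriv_right_le_deriv_boundary' hgc hg' hBa hBc hB' hbound'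
    (right_mem_Icc.mpr hr1)
  have hB1 : B 1 = (M / α) * (1 - r) ^ α := by
    simp [hB_def, Real.zero_rpow hα0.ne']
  have hg1 : g 1 = f x - f (r • x) := by simp [hg_def]
  rw [hg1, hB1] at key
  exact key

/-- Hardy–Littlewood lemma on the unit ball: a gradient blow-up bound
`‖Df(x)‖ ≤ M(1-|x|)^{α-1}` implies `α`-Hölder continuity, with a constant depending
only on `n` and `α`. -/
theorem stmt7 (n : ℕ) (hn : 1 ≤ n) (α : ℝ) (hα0 : 0 < α) (hα1 : α < 1) :
    ∃ C : ℝ, 0 < C ∧ ∀ (M : ℝ), 0 ≤ M →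
      ∀ f : EuclideanSpace ℝ (Fin n) → ℂ,
        (∀ x ∈ ball (0 : EuclideanSpace ℝ (Fin n)) 1, DifferentiableAt ℝ f x) →
        (∀ x ∈ ball (0 : EuclideanSpace ℝ (Fin n)) 1,
          ‖fderiv ℝ f x‖ ≤ M * (1 - ‖x‖) ^ (α - 1)) →
        ∀ x₀ ∈ ball (0 : EuclideanSpace ℝ (Fin n)) 1,
          ∀ x₁ ∈ ball (0 : EuclideanSpace ℝ (Fin n)) 1,
            ‖f x₀ - f x₁‖ ≤ C * M * ‖x₀ - x₁‖ ^ α := by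
  refine ⟨1 + 2 / α, by positivity, ?_⟩
  intro M hM f hdiff hbound x₀ hx₀ x₁ hx₁
  set d := ‖x₀ - x₁‖ with hd_def
  have hd0 : 0 ≤ d := norm_nonneg _
  rcases eq_or_lt_of_le hd0 with hd | hd
  · -- d = 0 : points are equal
    have : x₀ = x₁ := by
      rw [← sub_eq_zero]; exact norm_eq_zero.mp hd.symm
    simp [this, Real.zero_rpow hα0.ne', ← hd]
  -- helper radial estimates
  have hrad := fun (x : EuclideanSpace ℝ (Fin n)) (hx : x ∈ ball (0:EuclideanSpace ℝ (Fin n)) 1)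
      (r : ℝ) (hr0 : 0 ≤ r) (hr1 : r ≤ 1) =>
    radial_est hα0 hα1 hM f hdiff hbound hx hr0 hr1
  have hdα : 0 < d ^ α := Real.rpow_pos_of_pos hd α
  rcases le_or_gt 1 d with hd1 | hd1
  · -- far apart : use boundedness through the center
    have h0 : ‖f x₀ - f x₁‖ ≤ 2 * (M / α) := by
      have h1 := hrad x₀ hx₀ 0 le_rfl zero_le_one
      have h2 := hrad x₁ hx₁ 0 le_rfl zero_le_one
      simp only [zero_smul, sub_zero, Real.one_rpow, mul_one] at h1 h2
      calc ‖f x₀ - f x₁‖ ≤ ‖f x₀ - f 0‖ + ‖f 0 - f x₁‖ := norm_sub_le_norm_sub_add_norm_sub _ _ _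
        _ ≤ M / α + M / α := add_le_add h1 (by rwa [norm_sub_rev])
        _ = 2 * (M / α) := by ring
    have h1 : (1:ℝ) ≤ d ^ α := Real.one_le_rpow hd1 hα0.le
    calc ‖f x₀ - f x₁‖ ≤ 2 * (M / α) := h0
      _ = (2 / α) * M * 1 := by ring
      _ ≤ (2 / α) * M * d ^ α := by
          apply mul_le_mul_of_nonneg_left h1; positivity
      _ ≤ (1 + 2 / α) * M * d ^ α := by
          apply mul_le_mul_of_nonneg_right; · nlinarith [div_nonneg (by norm_num : (0:ℝ) ≤ 2) hα0.le, hM]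
          · positivity
  · -- close : radial + cross estimates
    set r : ℝ := 1 - d with hr_def
    have hr0 : 0 ≤ r := by simp [hr_def]; linarith
    have hr1 : r ≤ 1 := by simp [hr_def]; linarith
    have hrada := hrad x₀ hx₀ r hr0 hr1
    have hradb := hrad x₁ hx₁ r hr0 hr1
    have hsub : (1:ℝ) - r = d := by simp [hr_def]
    rw [hsub] at hrada hradb
    -- cross estimate on closedBall 0 r
    have hcross : ‖f (r • x₀) - f (r • x₁)‖ ≤ M * d ^ α := by
      have hconv : Convex ℝ (closedBall (0 : EuclideanSpace ℝ (Fin n)) r) := convex_closedBall _ _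
      have hsubset : closedBall (0 : EuclideanSpace ℝ (Fin n)) r ⊆
          ball (0 : EuclideanSpace ℝ (Fin n)) 1 := by
        apply closedBall_subset_ball; linarith
      have hdb : ∀ z ∈ closedBall (0 : EuclideanSpace ℝ (Fin n)) r, DifferentiableAt ℝ f z :=
        fun z hz => hdiff z (hsubset hz)
      have hbd : ∀ z ∈ closedBall (0 : EuclideanSpace ℝ (Fin n)) r,
          ‖fderiv ℝ f z‖ ≤ M * d ^ (α - 1) := by
        intro z hz
        have hz' : ‖z‖ ≤ r := by simpa using hz
        have h2 : d ≤ 1 - ‖z‖ := by simp [hr_def] at hz' ⊢; linarith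
        have h3 : (1 - ‖z‖) ^ (α - 1) ≤ d ^ (α - 1) :=
          Real.rpow_le_rpow_of_nonpos hd h2 (by linarith)
        exact (hbound z (hsubset hz)).trans (mul_le_mul_of_nonneg_left h3 hM)
      have hm0 : r • x₀ ∈ closedBall (0 : EuclideanSpace ℝ (Fin n)) r := by
        rw [mem_closedBall_zero_iff, norm_smul, Real.norm_eq_abs, abs_of_nonneg hr0]
        nlinarith [(mem_ball_zero_iff.mp hx₀).le, norm_nonneg x₀]
      have hm1 : r • x₁ ∈ closedBall (0 : EuclideanSpace ℝ (Fin n)) r := by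
        rw [mem_closedBall_zero_iff, norm_smul, Real.norm_eq_abs, abs_of_nonneg hr0]
        nlinarith [(mem_ball_zero_iff.mp hx₁).le, norm_nonneg x₁]
      have key := hconv.norm_image_sub_le_of_norm_fderiv_le hdb hbd hm1 hm0
      have hnorm : ‖r • x₀ - r • x₁‖ = r * d := by
        rw [← smul_sub, norm_smul, Real.norm_eq_abs, abs_of_nonneg hr0]
      rw [hnorm] at key
      calc ‖f (r • x₀) - f (r • x₁)‖ ≤ M * d ^ (α - 1) * (r * d) := key
        _ = M * (d ^ (α - 1) * d) * r := by ring
        _ = M * d ^ α * r := by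
            rw [Real.rpow_sub_one hd.ne' α]; field_simp
        _ ≤ M * d ^ α * 1 := by
            apply mul_le_mul_of_nonneg_left hr1; positivity
        _ = M * d ^ α := mul_one _
    calc ‖f x₀ - f x₁‖
        ≤ ‖f x₀ - f (r • x₀)‖ + ‖f (r • x₀) - f (r • x₁)‖ + ‖f (r • x₁) - f x₁‖ := by
          have := norm_sub_le_norm_sub_add_norm_sub (f x₀) (f (r • x₁)) (f x₁)
          have h2 := norm_sub_le_norm_sub_add_norm_sub (f x₀) (f (r • x₀)) (f (r • x₁))
          linarith
      _ ≤ (M / α) * d ^ α + M * d ^ α + (M / α) * d ^ α := by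
          have : ‖f (r • x₁) - f x₁‖ = ‖f x₁ - f (r • x₁)‖ := norm_sub_rev _ _
          rw [this]
          exact add_le_add (add_le_add hrada hcross) hradb
      _ = (1 + 2 / α) * M * d ^ α := by ring
end

section
/- Let Ω ⊆ ℝⁿ be a bounded convex open set, x₀ ∈ Ω with d₀ := dist(x₀, Ωᶜ) > 0, and let α < 0, M ≥ 0. Suppose f : Ω → ℂ is differentiable with ‖Df(z)‖ ≤ M·dist(z, Ωᶜ)^{α-1} for all z ∈ Ω. Then there exists a constant C depending only on α, d₀, and diam(Ω) such that |f(z)| ≤ |f(x₀)| + C·M·dist(z, Ωᶜ)^α for all z ∈ Ω. -/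
open Metric
set_option maxHeartbeats 1000000

lemma infDist_compl_concave {E : Type*} [NormedAddCommGroup E] [NormedSpace ℝ E]
    {Ω : Set E} (hconv : Convex ℝ Ω) {x y : E} (hx : x ∈ Ω) (hy : y ∈ Ω)
    {t : ℝ} (ht0 : 0 ≤ t) (ht1 : t ≤ 1) :
    (1 - t) * Metric.infDist x Ωᶜ + t * Metric.infDist y Ωᶜ
      ≤ Metric.infDist ((1 - t) • x + t • y) Ωᶜ := by
  set dx := Metric.infDist x Ωᶜ with hdx
  set dy := Metric.infDist y Ωᶜ with hdy
  set r := (1 - t) * dx + t * dy with hr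
  set p := (1 - t) • x + t • y with hp
  by_contra hcon
  push_neg at hcon
  have hdx0 : 0 ≤ dx := Metric.infDist_nonneg
  have hdy0 : 0 ≤ dy := Metric.infDist_nonneg
  have hrpos : 0 < r := lt_of_le_of_lt Metric.infDist_nonneg hcon
  have hne : Ωᶜ.Nonempty := by
    rcases Set.eq_empty_or_nonempty Ωᶜ with he | h
    · exfalso
      have h1 : dx = 0 := by rw [hdx, he, Metric.infDist_empty]
      have h2 : dy = 0 := by rw [hdy, he, Metric.infDist_empty]
      rw [hr, h1, h2] at hrpos; linarith
    · exact h
  obtain ⟨w, hw, hdw⟩ := (Metric.infDist_lt_iff hne).1 hcon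
  set v := w - p with hv
  have hvlt : ‖v‖ < r := by rwa [hv, ← dist_eq_norm'] 
  set v₀ := (dx / r) • v with hv₀
  set v₁ := (dy / r) • v with hv₁
  have hmem : ∀ (u : E) (du : ℝ), u ∈ Ω → Metric.infDist u Ωᶜ = du → 0 ≤ du →
      u + (du / r) • v ∈ Ω := by
    intro u du hu hdu hdu0
    rcases eq_or_lt_of_le hdu0 with h0 | h0
    · simpa [← h0] using hu
    · have hnorm : dist u (u + (du / r) • v) < du := by
        rw [dist_eq_norm]
        rw [sub_add_cancel_left, norm_neg, norm_smul, Real.norm_eq_abs, abs_of_pos (div_pos h0 hrpos)]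
        calc du / r * ‖v‖ < du / r * r := by
              apply mul_lt_mul_of_pos_left hvlt (div_pos h0 hrpos)
          _ = du := by field_simp
      have hnorm' : dist u (u + (du / r) • v) < Metric.infDist u Ωᶜ := by
        rw [hdu]; exact hnorm
      simpa using Metric.notMem_of_dist_lt_infDist hnorm'
  have hx' : x + v₀ ∈ Ω := hmem x dx hx rfl hdx0
  have hy' : y + v₁ ∈ Ω := hmem y dy hy rfl hdy0
  have hkey : (1 - t) • (x + v₀) + t • (y + v₁) = w := by
    have : (1 - t) • v₀ + t • v₁ = v := by
      rw [hv₀, hv₁, smul_smul, smul_smul, ← add_smul]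
      have : (1 - t) * (dx / r) + t * (dy / r) = 1 := by
        field_simp [hr]
        linarith [hr]
      rw [this, one_smul]
    calc (1 - t) • (x + v₀) + t • (y + v₁)
        = ((1 - t) • x + t • y) + ((1 - t) • v₀ + t • v₁) := by
          rw [smul_add, smul_add]; abel
      _ = p + v := by rw [this]
      _ = w := by rw [hv]; abel
  have hwΩ : w ∈ Ω := hkey ▸ hconv hx' hy' (by linarith) ht0 (by ring)
  exact hw hwΩ


/-- Negative-order Hardy–Littlewood bound on a bounded convex open set: if
`‖Df(z)‖ ≤ M·dist(z,Ωᶜ)^{α-1}` with `α < 0`, then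
`|f(z)| ≤ |f(x₀)| + C·M·dist(z,Ωᶜ)^α`, where `C` depends only on `α`,
`d₀ = dist(x₀,Ωᶜ)` and `diam Ω`. -/
theorem stmt8 {n : ℕ} (α : ℝ) (hα : α < 0) (d₀ D : ℝ) (hd₀ : 0 < d₀) :
    ∃ C : ℝ, ∀ (Ω : Set (EuclideanSpace ℝ (Fin n))) (x₀ : EuclideanSpace ℝ (Fin n))
      (M : ℝ) (f : EuclideanSpace ℝ (Fin n) → ℂ),
      IsOpen Ω → Convex ℝ Ω → Bornology.IsBounded Ω →
      x₀ ∈ Ω → Metric.infDist x₀ Ωᶜ = d₀ → Metric.diam Ω = D → 0 ≤ M →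
      (∀ z ∈ Ω, DifferentiableAt ℝ f z) →
      (∀ z ∈ Ω, ‖fderiv ℝ f z‖ ≤ M * Metric.infDist z Ωᶜ ^ (α - 1)) →
      ∀ z ∈ Ω, ‖f z‖ ≤ ‖f x₀‖ + C * M * Metric.infDist z Ωᶜ ^ α := by
  refine ⟨(D + 1) * ((d₀ / 2) ^ (α - 1) * (D + 1) ^ (-α) + 2 / (-α * d₀)), ?_⟩
  intro Ω x₀ M f hopen hconv hbdd hx₀ hdx₀ hdiam hM hdiff hbound z hz
  have hclosed : IsClosed Ωᶜ := hopen.isClosed_compl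
  have hne : Ωᶜ.Nonempty := by
    rcases Set.eq_empty_or_nonempty Ωᶜ with he | h
    · exfalso; rw [he, Metric.infDist_empty] at hdx₀; linarith
    · exact h
  set d := Metric.infDist z Ωᶜ with hd
  have hdpos : 0 < d := by
    rw [hd]
    exact (hclosed.notMem_iff_infDist_pos hne).1 (by simp [hz])
  have hD0 : 0 ≤ D := hdiam ▸ Metric.diam_nonneg
  have hzx : ‖z - x₀‖ ≤ D + 1 := by
    have := Metric.dist_le_diam_of_mem hbdd hz hx₀
    rw [hdiam, dist_eq_norm] at this; linarith
  -- d ≤ D + 1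
  have hdD : d ≤ D + 1 := by
    obtain ⟨w, hw⟩ := hne
    have hwz : w ≠ z := fun h => hw (h ▸ hz)
    set e : EuclideanSpace ℝ (Fin n) := ‖w - z‖⁻¹ • (w - z) with he'
    have he : ‖e‖ = 1 := by
      rw [he', norm_smul, norm_inv, norm_norm, inv_mul_cancel₀]
      exact norm_ne_zero_iff.2 (sub_ne_zero.2 hwz)
    set y := z + (D + 1) • e with hy'
    have hyz : dist z y = D + 1 := by
      rw [dist_eq_norm, hy']
      have : z - (z + (D + 1) • e) = -((D + 1) • e) := by abel
      rw [this, norm_neg, norm_smul, Real.norm_eq_abs, he, mul_one,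
        abs_of_nonneg (by linarith : (0:ℝ) ≤ D + 1)]
    have hy : y ∈ Ωᶜ := by
      intro hyΩ
      have := Metric.dist_le_diam_of_mem hbdd hz hyΩ
      rw [hyz, hdiam] at this; linarith
    calc d ≤ dist z y := Metric.infDist_le_dist_of_mem hy
      _ = D + 1 := hyz
  -- segment setup
  set v : EuclideanSpace ℝ (Fin n) := z - x₀ with hv
  set γ : ℝ → EuclideanSpace ℝ (Fin n) := fun t => x₀ + t • v with hγ
  have hγeq : ∀ t : ℝ, γ t = (1 - t) • x₀ + t • z := by
    intro t; rw [hγ, hv]; simp [smul_sub, sub_smul]; abel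
  have hseg : ∀ t ∈ Set.Icc (0:ℝ) 1, γ t ∈ Ω := by
    intro t ht
    rw [hγeq]
    exact hconv hx₀ hz (by linarith [ht.2]) ht.1 (by ring)
  set g : ℝ → ℝ := fun t => d₀ + t * (d - d₀) with hg
  have hglb : ∀ t ∈ Set.Icc (0:ℝ) 1, g t ≤ Metric.infDist (γ t) Ωᶜ := by
    intro t ht
    have := infDist_compl_concave hconv hx₀ hz ht.1 ht.2
    rw [hdx₀, ← hd] at this
    rw [hγeq, hg]
    calc d₀ + t * (d - d₀) = (1 - t) * d₀ + t * d := by ring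
      _ ≤ _ := this
  have hgpos : ∀ t ∈ Set.Icc (0:ℝ) 1, 0 < g t := by
    intro t ht
    rcases lt_or_ge t 1 with h1 | h1
    · have : 0 < (1 - t) * d₀ := mul_pos (by linarith) hd₀
      have h2 : 0 ≤ t * d := mul_nonneg ht.1 hdpos.le
      show 0 < d₀ + t * (d - d₀); nlinarith
    · have ht1 : t = 1 := le_antisymm ht.2 h1
      show 0 < d₀ + t * (d - d₀); rw [ht1]; simpa using hdpos
  -- derivative of φ along the segment
  have hφ' : ∀ t ∈ Set.Icc (0:ℝ) 1,
      HasDerivAt (fun t => f (γ t) - f x₀) ((fderiv ℝ f (γ t)) v) t := by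
    intro t ht
    have hγd : HasDerivAt γ v t := by
      rw [hγ]
      simpa using ((hasDerivAt_id t).smul_const v).const_add x₀
    exact (((hdiff _ (hseg t ht)).hasFDerivAt.comp_hasDerivAt t hγd)).sub_const (f x₀)
  have hφbound : ∀ t ∈ Set.Icc (0:ℝ) 1,
      ‖(fderiv ℝ f (γ t)) v‖ ≤ M * ‖v‖ * g t ^ (α - 1) := by
    intro t ht
    calc ‖(fderiv ℝ f (γ t)) v‖ ≤ ‖fderiv ℝ f (γ t)‖ * ‖v‖ :=
          ContinuousLinearMap.le_opNorm _ _
      _ ≤ M * Metric.infDist (γ t) Ωᶜ ^ (α - 1) * ‖v‖ := by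
          apply mul_le_mul_of_nonneg_right (hbound _ (hseg t ht)) (norm_nonneg _)
      _ ≤ M * g t ^ (α - 1) * ‖v‖ := by
          apply mul_le_mul_of_nonneg_right _ (norm_nonneg _)
          apply mul_le_mul_of_nonneg_left _ hM
          exact Real.rpow_le_rpow_of_nonpos (hgpos t ht) (hglb t ht) (by linarith)
      _ = M * ‖v‖ * g t ^ (α - 1) := by ring
  -- key constants
  have hDp : (0:ℝ) < D + 1 := by linarith
  set A := (d₀ / 2) ^ (α - 1) with hAdef
  set P := (D + 1) ^ (-α) with hPdef
  set T := 2 / (-α * d₀) with hTdef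
  set Q := d ^ α with hQdef
  have hA : (0:ℝ) < A := Real.rpow_pos_of_pos (by linarith) _
  have hP : (0:ℝ) < P := Real.rpow_pos_of_pos hDp _
  have hT : (0:ℝ) < T := div_pos two_pos (mul_pos (neg_pos.2 hα) hd₀)
  have hQ : (0:ℝ) < Q := Real.rpow_pos_of_pos hdpos _
  have hPQ : (1:ℝ) ≤ P * Q := by
    have h1 : (D + 1) ^ α ≤ Q := Real.rpow_le_rpow_of_nonpos hdpos hdD hα.le
    have h2 : P * (D + 1) ^ α = 1 := by
      rw [hPdef, ← Real.rpow_add hDp]; simp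
    calc (1:ℝ) = P * (D + 1) ^ α := h2.symm
      _ ≤ P * Q := mul_le_mul_of_nonneg_left h1 hP.le
  -- main estimate on ‖f z - f x₀‖
  have hmain : ‖f z - f x₀‖ ≤ ‖f x₀‖ - ‖f x₀‖ +
      (D + 1) * (A * P + T) * M * Q := by
    rw [sub_self, zero_add]
    rcases lt_or_ge d (d₀ / 2) with hcase | hcase
    · -- d < d₀/2 : comparison along the segment
      have hq : 0 < α * (d - d₀) := mul_pos_of_neg_of_neg hα (by linarith)
      set c : ℝ := M * ‖v‖ / (α * (d - d₀)) with hc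
      set B : ℝ → ℝ := fun t => c * (g t ^ α - d₀ ^ α) with hB
      have hBderiv : ∀ t ∈ Set.Icc (0:ℝ) 1,
          HasDerivAt B (M * ‖v‖ * g t ^ (α - 1)) t := by
        intro t ht
        have hgd : HasDerivAt g (d - d₀) t := by
          rw [hg]; simpa using ((hasDerivAt_id t).mul_const (d - d₀)).const_add d₀
        have hrp : HasDerivAt (fun t => g t ^ α) (α * g t ^ (α - 1) * (d - d₀)) t := by
          have := (Real.hasDerivAt_rpow_const
            (x := g t) (p := α) (Or.inl (hgpos t ht).ne')).comp t hgd
          simpa [mul_comm, mul_assoc, Function.comp_def] using this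
        have h1 : HasDerivAt B (c * (α * g t ^ (α - 1) * (d - d₀))) t :=
          (hrp.sub_const (d₀ ^ α)).const_mul c
        have h2 : c * (α * g t ^ (α - 1) * (d - d₀)) = M * ‖v‖ * g t ^ (α - 1) := by
          rw [hc, show M * ‖v‖ / (α * (d - d₀)) * (α * g t ^ (α - 1) * (d - d₀)) = M * ‖v‖ * g t ^ (α - 1) * ((α * (d - d₀)) / (α * (d - d₀))) by ring, div_self hq.ne', mul_one]
        rwa [h2] at h1
      have hfence := image_norm_le_of_norm_deriv_right_le_deriv_boundary'
        (f := fun t => f (γ t) - f x₀) (a := 0) (b := 1)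
        (f' := fun t => (fderiv ℝ f (γ t)) v)
        (fun t ht => (hφ' t ht).continuousAt.continuousWithinAt)
        (fun t ht => (hφ' t (Set.Ico_subset_Icc_self ht)).hasDerivWithinAt)
        (B := B) (B' := fun t => M * ‖v‖ * g t ^ (α - 1))
        (by
          have hγ0 : γ 0 = x₀ := by rw [hγ]; simp
          have hg0 : g 0 = d₀ := by rw [hg]; simp
          simp [hγ0, hB, hg0])
        (fun t ht => (hBderiv t ht).continuousAt.continuousWithinAt)
        (fun t ht => (hBderiv t (Set.Ico_subset_Icc_self ht)).hasDerivWithinAt)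
        (fun t ht => hφbound t (Set.Ico_subset_Icc_self ht))
        (Set.right_mem_Icc.2 zero_le_one)
      have hγ1 : γ 1 = z := by rw [hγ, hv]; simp
      have hg1 : g 1 = d := by rw [hg]; ring
      have hfence2 : ‖f z - f x₀‖ ≤ c * (d ^ α - d₀ ^ α) := by
        have hB1 : B 1 = c * (d ^ α - d₀ ^ α) := by rw [hB]; simp only; rw [hg1]
        simpa only [hγ1, hB1] using hfence
      clear hfence
      have hfence := hfence2
      -- now estimate c * (d^α - d₀^α)
      have hXQ : d ^ α - d₀ ^ α ≤ d ^ α :=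
        sub_le_self _ (Real.rpow_pos_of_pos hd₀ _).le
      have hqlb : -α * (d₀ / 2) ≤ α * (d - d₀) := by nlinarith
      have hdiv : (d ^ α - d₀ ^ α) / (α * (d - d₀)) ≤ d ^ α / (-α * (d₀ / 2)) :=
        div_le_div₀ hQ.le hXQ (by nlinarith) hqlb
      have hdiv2 : d ^ α / (-α * (d₀ / 2)) = T * Q := by
        rw [hTdef, hQdef]; field_simp
      have key : c * (d ^ α - d₀ ^ α) ≤ (D + 1) * (A * P + T) * M * Q := by
        have e0 : c * (d ^ α - d₀ ^ α) = M * ‖v‖ * ((d ^ α - d₀ ^ α) / (α * (d - d₀))) := by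
          rw [hc]; ring
        rw [e0]
        have e1 : M * ‖v‖ * ((d ^ α - d₀ ^ α) / (α * (d - d₀)))
            ≤ M * ‖v‖ * (T * Q) := by
          apply mul_le_mul_of_nonneg_left _ (mul_nonneg hM (norm_nonneg _))
          rw [← hdiv2]; exact hdiv
        have s1 : M * ‖v‖ ≤ M * (D + 1) := mul_le_mul_of_nonneg_left hzx hM
        have s2 : M * ‖v‖ * (T * Q) ≤ M * (D + 1) * (T * Q) :=
          mul_le_mul_of_nonneg_right s1 (mul_nonneg hT.le hQ.le)
        have s3 : 0 ≤ (D + 1) * (A * P) * (M * Q) :=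
          mul_nonneg (mul_nonneg hDp.le (mul_nonneg hA.le hP.le)) (mul_nonneg hM hQ.le)
        have s4 : (D + 1) * (A * P + T) * M * Q
            = (D + 1) * (A * P) * (M * Q) + M * (D + 1) * (T * Q) := by ring
        linarith
      exact le_trans hfence key
    · -- d ≥ d₀/2 : constant bound on the segment
      have hS : segment ℝ x₀ z ⊆ Ω := hconv.segment_subset hx₀ hz
      have hbnd : ∀ x ∈ segment ℝ x₀ z,
          ‖fderiv ℝ f x‖ ≤ M * (d₀ / 2) ^ (α - 1) := by
        intro x hxS
        obtain ⟨a, b, ha, hb, hab, rfl⟩ := hxS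
        have hx' : a • x₀ + b • z = (1 - b) • x₀ + b • z := by
          rw [show a = 1 - b by linarith]
        have hb1 : b ≤ 1 := by linarith
        have hlow : d₀ / 2 ≤ Metric.infDist (a • x₀ + b • z) Ωᶜ := by
          have h1 := hglb b ⟨hb, hb1⟩
          rw [hγeq] at h1
          rw [hx']
          refine le_trans ?_ h1
          show d₀ / 2 ≤ d₀ + b * (d - d₀)
          nlinarith
        calc ‖fderiv ℝ f (a • x₀ + b • z)‖
            ≤ M * Metric.infDist (a • x₀ + b • z) Ωᶜ ^ (α - 1) :=
              hbound _ (hS ⟨a, b, ha, hb, hab, rfl⟩)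
          _ ≤ M * (d₀ / 2) ^ (α - 1) := by
              apply mul_le_mul_of_nonneg_left _ hM
              exact Real.rpow_le_rpow_of_nonpos (by linarith) hlow (by linarith)
      have h1 : ‖f z - f x₀‖ ≤ M * A * ‖z - x₀‖ :=
        (convex_segment x₀ z).norm_image_sub_le_of_norm_fderiv_le
          (fun x hxS => hdiff x (hS hxS)) hbnd
          (left_mem_segment ℝ x₀ z) (right_mem_segment ℝ x₀ z)
      rw [← hv] at h1
      have h2 : M * A * ‖v‖ ≤ (D + 1) * (A * P + T) * M * Q := by
        have t1 : M * A * ‖v‖ ≤ M * A * (D + 1) :=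
          mul_le_mul_of_nonneg_left hzx (mul_nonneg hM hA.le)
        have t3 : M * A * (D + 1) * 1 ≤ M * A * (D + 1) * (P * Q) :=
          mul_le_mul_of_nonneg_left hPQ
            (mul_nonneg (mul_nonneg hM hA.le) hDp.le)
        have t4 : 0 ≤ (D + 1) * T * (M * Q) :=
          mul_nonneg (mul_nonneg hDp.le hT.le) (mul_nonneg hM hQ.le)
        have t5 : (D + 1) * (A * P + T) * M * Q
            = M * A * (D + 1) * (P * Q) + (D + 1) * T * (M * Q) := by ring
        rw [mul_one] at t3
        linarith
      linarith
  calc ‖f z‖ = ‖f x₀ + (f z - f x₀)‖ := by ring_nf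
    _ ≤ ‖f x₀‖ + ‖f z - f x₀‖ := norm_add_le _ _
    _ ≤ ‖f x₀‖ + ((D + 1) * (A * P + T) * M * Q) := by linarith [hmain]
    _ = ‖f x₀‖ + (D + 1) * (A * P + T) * M * Q := by ring
end

section
/- Let m ≥ 1, a₁,…,a_m ∈ ℝ and b₁,…,b_m > 0 satisfy Σ_{j=1}^m a_j·b_j·(-b_j)^k = -1 for k = 0, 1, 2, 3. Let B = max_j b_j, R > 0, K ≥ 0, and let ψ : [-B·R, R] → ℂ be four times continuously differentiable with |ψ⁗(s)| ≤ K for all s. Then for every ρ ∈ [0, R], | ψ(ρ) + Σ_{j=1}^m a_j·b_j·ψ(-b_j·ρ) | ≤ (1/24)·(1 + Σ_{j=1}^m |a_j|·b_j^5)·K·ρ⁴. -/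
open Set

open scoped Nat

/-- Sharp Taylor remainder bound (both sides of the base point `x₀`):
`‖f x - P_n(x₀, x)‖ ≤ C |x - x₀|^{n+1} / (n+1)!`. -/
theorem taylor_sharp {E : Type*} [NormedAddCommGroup E] [NormedSpace ℝ E]
    {f : ℝ → E} {a b C x x₀ : ℝ} {n : ℕ} (hab : a < b)
    (hf : ContDiffOn ℝ (n + 1) f (Icc a b)) (hx : x ∈ Icc a b) (hx₀ : x₀ ∈ Icc a b)
    (hC : ∀ y ∈ Icc a b, ‖iteratedDerivWithin (n + 1) f (Icc a b) y‖ ≤ C) :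
    ‖f x - taylorWithinEval f n (Icc a b) x₀ x‖ ≤ C * |x - x₀| ^ (n + 1) / (n + 1)! := by
  have hC0 : 0 ≤ C := le_trans (norm_nonneg _) (hC x hx)
  have hf' : DifferentiableOn ℝ (iteratedDerivWithin n f (Icc a b)) (Icc a b) :=
    hf.differentiableOn_iteratedDerivWithin (mod_cast n.lt_succ_self) (uniqueDiffOn_Icc hab)
  set F : ℝ → E := fun t => taylorWithinEval f n (Icc a b) t x with hF
  have A : ∀ t ∈ Icc a b, HasDerivWithinAt F
      (((n ! : ℝ)⁻¹ * (x - t) ^ n) • iteratedDerivWithin (n + 1) f (Icc a b) t) (Icc a b) t :=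
    fun t ht => hasDerivWithinAt_taylorWithinEval_at_Icc x hab ht hf.of_succ hf'
  have hmem : ∀ t ∈ Icc a b, t < b → Icc a b ∈ nhdsWithin t (Ici t) := by
    intro t ht htb
    refine mem_nhdsWithin.2 ⟨Iio b, isOpen_Iio, htb, ?_⟩
    rintro y ⟨hy1, hy2⟩
    exact ⟨ht.1.trans hy2, hy1.le⟩
  rcases le_total x₀ x with h | h
  · -- expansion to the right
    have hsub : Icc x₀ x ⊆ Icc a b := Icc_subset_Icc hx₀.1 hx.2
    have hFc : ContinuousOn F (Icc x₀ x) :=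
      fun t ht => ((A t (hsub ht)).continuousWithinAt).mono hsub
    have hcont : ContinuousOn (fun t => F t - F x₀) (Icc x₀ x) :=
      hFc.sub continuousOn_const
    set Bd : ℝ → ℝ := fun t => C * ((x - x₀) ^ (n + 1) - (x - t) ^ (n + 1)) / (n + 1)! with hBd
    have hBderiv : ∀ t, HasDerivAt Bd (C * (x - t) ^ n / n !) t := by
      intro t
      have h1 : HasDerivAt (fun t => (x - x₀) ^ (n + 1) - (x - t) ^ (n + 1))
          (0 - (-(n + 1) * (x - t) ^ n)) t :=
        (hasDerivAt_const t _).sub (monomial_has_deriv_aux t x n)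
      have h2 := (h1.const_mul C).div_const ((n + 1)! : ℝ)
      refine h2.congr_deriv ?_
      rw [Nat.factorial_succ]
      push_cast
      field_simp
      ring
    have hds : ∀ t ∈ Ico x₀ x, HasDerivWithinAt (fun t => F t - F x₀)
        (((n ! : ℝ)⁻¹ * (x - t) ^ n) • iteratedDerivWithin (n + 1) f (Icc a b) t) (Ici t) t := by
      intro t ht
      have htab : t ∈ Icc a b := ⟨hx₀.1.trans ht.1, ht.2.le.trans hx.2⟩
      exact ((A t htab).mono_of_mem_nhdsWithin
        (hmem t htab (lt_of_lt_of_le ht.2 hx.2))).sub_const _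
    have hbound : ∀ t ∈ Ico x₀ x,
        ‖((n ! : ℝ)⁻¹ * (x - t) ^ n) • iteratedDerivWithin (n + 1) f (Icc a b) t‖
          ≤ C * (x - t) ^ n / n ! := by
      intro t ht
      have htab : t ∈ Icc a b := ⟨hx₀.1.trans ht.1, ht.2.le.trans hx.2⟩
      have hxt : (0 : ℝ) ≤ x - t := sub_nonneg.2 ht.2.le
      rw [norm_smul, Real.norm_eq_abs, abs_mul, abs_inv, Nat.abs_cast, abs_pow,
        abs_of_nonneg hxt]
      calc (n ! : ℝ)⁻¹ * (x - t) ^ n * ‖iteratedDerivWithin (n + 1) f (Icc a b) t‖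
          ≤ (n ! : ℝ)⁻¹ * (x - t) ^ n * C :=
            mul_le_mul_of_nonneg_left (hC t htab)
              (mul_nonneg (inv_nonneg.2 (Nat.cast_nonneg _)) (pow_nonneg hxt n))
        _ = C * (x - t) ^ n / n ! := by rw [div_eq_mul_inv]; ring
    have ha0 : ‖F x₀ - F x₀‖ ≤ Bd x₀ := by simp [hBd]
    have := image_norm_le_of_norm_deriv_right_le_deriv_boundary hcont hds ha0 hBderiv hbound
      (right_mem_Icc.2 h)
    rw [hBd] at this
    simp only [hF, taylorWithinEval_self] at this
    calc ‖f x - taylorWithinEval f n (Icc a b) x₀ x‖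
        ≤ C * ((x - x₀) ^ (n + 1) - (x - x) ^ (n + 1)) / (n + 1)! := this
      _ = C * (x - x₀) ^ (n + 1) / (n + 1)! := by
          rw [sub_self]
          rcases Nat.eq_zero_or_pos (n + 1) with h0 | h0
          · omega
          · rw [zero_pow (by omega)]; ring
      _ = C * |x - x₀| ^ (n + 1) / (n + 1)! := by rw [abs_of_nonneg (sub_nonneg.2 h)]
  · -- expansion to the left
    have hsub : Icc x x₀ ⊆ Icc a b := Icc_subset_Icc hx.1 hx₀.2
    have hFc : ContinuousOn F (Icc x x₀) :=
      fun t ht => ((A t (hsub ht)).continuousWithinAt).mono hsub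
    have hcont : ContinuousOn (fun t => F t - F x) (Icc x x₀) :=
      hFc.sub continuousOn_const
    set Bd : ℝ → ℝ := fun t => C * (t - x) ^ (n + 1) / (n + 1)! with hBd
    have hBderiv : ∀ t, HasDerivAt Bd (C * (t - x) ^ n / n !) t := by
      intro t
      have h1 : HasDerivAt (fun t => (t - x) ^ (n + 1)) ((n + 1) * (t - x) ^ n) t := by
        simpa using ((hasDerivAt_id t).sub_const x).fun_pow (n + 1)
      have h2 := (h1.const_mul C).div_const ((n + 1)! : ℝ)
      refine h2.congr_deriv ?_
      rw [Nat.factorial_succ]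
      push_cast
      field_simp
    have hds : ∀ t ∈ Ico x x₀, HasDerivWithinAt (fun t => F t - F x)
        (((n ! : ℝ)⁻¹ * (x - t) ^ n) • iteratedDerivWithin (n + 1) f (Icc a b) t) (Ici t) t := by
      intro t ht
      have htab : t ∈ Icc a b := ⟨hx.1.trans ht.1, ht.2.le.trans hx₀.2⟩
      exact ((A t htab).mono_of_mem_nhdsWithin
        (hmem t htab (lt_of_lt_of_le ht.2 hx₀.2))).sub_const _
    have hbound : ∀ t ∈ Ico x x₀,
        ‖((n ! : ℝ)⁻¹ * (x - t) ^ n) • iteratedDerivWithin (n + 1) f (Icc a b) t‖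
          ≤ C * (t - x) ^ n / n ! := by
      intro t ht
      have htab : t ∈ Icc a b := ⟨hx.1.trans ht.1, ht.2.le.trans hx₀.2⟩
      have hxt : (0 : ℝ) ≤ t - x := sub_nonneg.2 ht.1
      rw [norm_smul, Real.norm_eq_abs, abs_mul, abs_inv, Nat.abs_cast, abs_pow,
        abs_sub_comm, abs_of_nonneg hxt]
      calc (n ! : ℝ)⁻¹ * (t - x) ^ n * ‖iteratedDerivWithin (n + 1) f (Icc a b) t‖
          ≤ (n ! : ℝ)⁻¹ * (t - x) ^ n * C :=
            mul_le_mul_of_nonneg_left (hC t htab)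
              (mul_nonneg (inv_nonneg.2 (Nat.cast_nonneg _)) (pow_nonneg hxt n))
        _ = C * (t - x) ^ n / n ! := by rw [div_eq_mul_inv]; ring
    have ha0 : ‖F x - F x‖ ≤ Bd x := by simp [hBd]
    have := image_norm_le_of_norm_deriv_right_le_deriv_boundary hcont hds ha0 hBderiv hbound
      (right_mem_Icc.2 h)
    rw [hBd] at this
    simp only [hF, taylorWithinEval_self] at this
    calc ‖f x - taylorWithinEval f n (Icc a b) x₀ x‖
        = ‖taylorWithinEval f n (Icc a b) x₀ x - f x‖ := norm_sub_rev _ _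
      _ ≤ C * (x₀ - x) ^ (n + 1) / (n + 1)! := this
      _ = C * |x - x₀| ^ (n + 1) / (n + 1)! := by
          rw [abs_sub_comm, abs_of_nonneg (sub_nonneg.2 h)]

/-- Fourth-order Taylor cancellation: if `Σ_j a_j b_j (-b_j)^k = -1` for `k = 0,1,2,3` and
`ψ` is `C⁴` on `[-BR, R]` with `|ψ⁗| ≤ K`, then
`|ψ(ρ) + Σ_j a_j b_j ψ(-b_j ρ)| ≤ (1/24)(1 + Σ_j |a_j| b_j⁵) K ρ⁴` for `ρ ∈ [0,R]`. -/
theorem stmt14 (m : ℕ) (hm : 1 ≤ m) (a b : Fin m → ℝ)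
    (hb : ∀ j, 0 < b j)
    (hmom : ∀ k : ℕ, k ≤ 3 → ∑ j, a j * b j * (-(b j)) ^ k = -1)
    (B : ℝ) (hB : IsGreatest (Set.range b) B)
    (R K : ℝ) (hR : 0 < R) (hK : 0 ≤ K)
    (ψ : ℝ → ℂ)
    (hψ : ContDiffOn ℝ 4 ψ (Icc (-(B * R)) R))
    (hψ4 : ∀ s ∈ Icc (-(B * R)) R, ‖iteratedDerivWithin 4 ψ (Icc (-(B * R)) R) s‖ ≤ K) :
    ∀ ρ ∈ Icc (0 : ℝ) R,
      ‖ψ ρ + ∑ j, ((a j * b j : ℝ) : ℂ) * ψ (-(b j) * ρ)‖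
        ≤ (1 / 24) * (1 + ∑ j, |a j| * b j ^ 5) * K * ρ ^ 4 := by
  intro ρ hρ
  have hBpos : 0 < B := by
    obtain ⟨j, hj⟩ := hB.1
    rw [← hj]; exact hb j
  have hbB : ∀ j, b j ≤ B := fun j => hB.2 ⟨j, rfl⟩
  have hcneg : -(B * R) < 0 := neg_neg_of_pos (by positivity)
  have hab : -(B * R) < R := hcneg.trans hR
  set T : Set ℝ := Icc (-(B * R)) R with hT
  have h0T : (0 : ℝ) ∈ T := ⟨hcneg.le, hR.le⟩
  have hρT : ρ ∈ T := ⟨hcneg.le.trans hρ.1, hρ.2⟩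
  have hjT : ∀ j, -(b j) * ρ ∈ T := by
    intro j
    constructor
    · rw [neg_mul]
      apply neg_le_neg
      exact mul_le_mul (hbB j) hρ.2 hρ.1 hBpos.le
    · have h1 : -(b j) * ρ ≤ 0 := by
        rw [neg_mul, neg_nonpos]
        exact mul_nonneg (hb j).le hρ.1
      linarith
  set P : ℝ → ℂ := fun x => taylorWithinEval ψ 3 T 0 x with hP
  have hψ' : ContDiffOn ℝ ((3 : ℕ) + 1) ψ T := by exact_mod_cast hψ
  have key : ∀ x ∈ T, ‖ψ x - P x‖ ≤ K * |x| ^ 4 / 24 := by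
    intro x hx
    have := taylor_sharp (n := 3) hab hψ' hx h0T hψ4
    rw [show (((3 + 1)! : ℕ) : ℝ) = 24 from by norm_num [Nat.factorial], sub_zero] at this
    exact this
  have hPapply : ∀ x : ℝ, P x
      = ∑ k ∈ Finset.range 4, ((((k ! : ℝ)⁻¹ * x ^ k : ℝ)) : ℂ)
          * iteratedDerivWithin k ψ T 0 := by
    intro x
    show taylorWithinEval ψ 3 T 0 x = _
    rw [taylor_within_apply]
    refine Finset.sum_congr rfl fun k _ => ?_
    rw [sub_zero, Complex.real_smul]
  have cancel : P ρ + ∑ j, ((a j * b j : ℝ) : ℂ) * P (-(b j) * ρ) = 0 := by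
    simp_rw [hPapply, Finset.mul_sum]
    rw [Finset.sum_comm, ← Finset.sum_add_distrib]
    refine Finset.sum_eq_zero fun k hk => ?_
    have hk3 : k ≤ 3 := Nat.lt_succ_iff.mp (Finset.mem_range.mp hk)
    have hmomk := hmom k hk3
    have hterm : ∀ j : Fin m, ((a j * b j : ℝ) : ℂ)
        * (((((k ! : ℝ)⁻¹ * (-(b j) * ρ) ^ k : ℝ)) : ℂ) * iteratedDerivWithin k ψ T 0)
        = (((a j * b j * ((k ! : ℝ)⁻¹ * (-(b j) * ρ) ^ k) : ℝ)) : ℂ)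
            * iteratedDerivWithin k ψ T 0 := by
      intro j; push_cast; ring
    rw [Finset.sum_congr rfl fun j _ => hterm j, ← Finset.sum_mul, ← Complex.ofReal_sum,
      ← add_mul, ← Complex.ofReal_add]
    have hreal : (k ! : ℝ)⁻¹ * ρ ^ k
        + ∑ j, a j * b j * ((k ! : ℝ)⁻¹ * (-(b j) * ρ) ^ k) = 0 := by
      have h1 : ∀ j : Fin m, a j * b j * ((k ! : ℝ)⁻¹ * (-(b j) * ρ) ^ k)
          = ((k ! : ℝ)⁻¹ * ρ ^ k) * (a j * b j * (-(b j)) ^ k) := by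
        intro j; rw [mul_pow]; ring
      rw [Finset.sum_congr rfl fun j _ => h1 j, ← Finset.mul_sum, hmomk]
      ring
    rw [hreal]
    simp
  have hsplit : ∑ j, ((a j * b j : ℝ) : ℂ) * (ψ (-(b j) * ρ) - P (-(b j) * ρ))
      = ∑ j, ((a j * b j : ℝ) : ℂ) * ψ (-(b j) * ρ)
        - ∑ j, ((a j * b j : ℝ) : ℂ) * P (-(b j) * ρ) := by
    rw [← Finset.sum_sub_distrib]
    exact Finset.sum_congr rfl fun j _ => mul_sub _ _ _
  have expand : ψ ρ + ∑ j, ((a j * b j : ℝ) : ℂ) * ψ (-(b j) * ρ)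
      = (ψ ρ - P ρ) + ∑ j, ((a j * b j : ℝ) : ℂ) * (ψ (-(b j) * ρ) - P (-(b j) * ρ)) := by
    rw [hsplit]
    linear_combination cancel
  rw [expand]
  have hbnd : ∀ j : Fin m, ‖((a j * b j : ℝ) : ℂ) * (ψ (-(b j) * ρ) - P (-(b j) * ρ))‖
      ≤ |a j| * b j ^ 5 * (K * ρ ^ 4 / 24) := by
    intro j
    rw [norm_mul, Complex.norm_real, Real.norm_eq_abs, abs_mul, abs_of_pos (hb j)]
    have h1 : ‖ψ (-(b j) * ρ) - P (-(b j) * ρ)‖ ≤ K * (b j ^ 4 * ρ ^ 4) / 24 := by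
      have := key _ (hjT j)
      have habs : |(-(b j) * ρ)| ^ 4 = b j ^ 4 * ρ ^ 4 := by
        rw [abs_mul, abs_neg, abs_of_pos (hb j), abs_of_nonneg hρ.1, mul_pow]
      rwa [habs] at this
    calc |a j| * b j * ‖ψ (-(b j) * ρ) - P (-(b j) * ρ)‖
        ≤ |a j| * b j * (K * (b j ^ 4 * ρ ^ 4) / 24) := by
          gcongr
          exact mul_nonneg (abs_nonneg _) (hb j).le
      _ = |a j| * b j ^ 5 * (K * ρ ^ 4 / 24) := by ring
  calc ‖(ψ ρ - P ρ) + ∑ j, ((a j * b j : ℝ) : ℂ) * (ψ (-(b j) * ρ) - P (-(b j) * ρ))‖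
      ≤ ‖ψ ρ - P ρ‖ + ∑ j, ‖((a j * b j : ℝ) : ℂ) * (ψ (-(b j) * ρ) - P (-(b j) * ρ))‖ :=
        le_trans (norm_add_le _ _) (by gcongr; exact norm_sum_le _ _)
    _ ≤ K * ρ ^ 4 / 24 + ∑ j, |a j| * b j ^ 5 * (K * ρ ^ 4 / 24) := by
        gcongr with j hj
        · have := key ρ hρT
          rwa [abs_of_nonneg hρ.1] at this
        · exact hbnd j
    _ = (1 / 24) * (1 + ∑ j, |a j| * b j ^ 5) * K * ρ ^ 4 := by
        rw [← Finset.sum_mul]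
        ring
end

section
/- Identify ℂ with ℝ² and define the Wirtinger derivatives ∂_w = (1/2)(∂_x - i∂_y) and ∂_{w̄} = (1/2)(∂_x + i∂_y). For 0 < |w| < 1 let f(w) = w̄·(-log|w|)^{1/3}. Then f is real-differentiable on {0 < |w| < 1} and: (1) ∂_w f(w) = -(1/6)·(-log|w|)^{-2/3}·(w̄/w); (2) ∂_{w̄} f(w) = (-log|w|)^{1/3} - (1/6)·(-log|w|)^{-2/3}. In particular ∂_w f is bounded near w = 0 while ∂_{w̄} f(w) → ∞ as w → 0. -/
open Filter

/-- The Wirtinger derivative `∂_w = (1/2)(∂_x - i∂_y)`, expressed via the real Fréchet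
derivative of a map `ℂ → ℂ`. -/
noncomputable def wirtDw (f : ℂ → ℂ) (w : ℂ) : ℂ :=
  (1 / 2 : ℂ) * (fderiv ℝ f w 1 - Complex.I * fderiv ℝ f w Complex.I)

/-- The Wirtinger derivative `∂_w̄ = (1/2)(∂_x + i∂_y)`. -/
noncomputable def wirtDwBar (f : ℂ → ℂ) (w : ℂ) : ℂ :=
  (1 / 2 : ℂ) * (fderiv ℝ f w 1 + Complex.I * fderiv ℝ f w Complex.I)

/-- The function `f(w) = w̄·(-log|w|)^{1/3}`. -/
noncomputable def f15 (w : ℂ) : ℂ :=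
  (starRingEnd ℂ) w * (((-Real.log (‖w‖)) ^ ((1 : ℝ) / 3) : ℝ) : ℂ)

/-- The main pointwise computation. -/
lemma aux15 {w : ℂ} (h0 : 0 < ‖w‖) (h1 : ‖w‖ < 1) :
    DifferentiableAt ℝ f15 w ∧
    wirtDw f15 w
      = -(1 / 6 : ℂ) * (((-Real.log (‖w‖)) ^ (-(2 : ℝ) / 3) : ℝ) : ℂ)
          * ((starRingEnd ℂ) w / w) ∧
    wirtDwBar f15 w
      = (((-Real.log (‖w‖)) ^ ((1 : ℝ) / 3) : ℝ) : ℂ)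
          - (1 / 6 : ℂ) * (((-Real.log (‖w‖)) ^ (-(2 : ℝ) / 3) : ℝ) : ℂ) := by
  have hw : w ≠ 0 := by simpa using (norm_pos_iff.mp h0 : w ≠ 0)
  set n : ℝ := Complex.normSq w with hn
  have hnpos : 0 < n := Complex.normSq_pos.mpr hw
  set L : ℝ := -Real.log (‖w‖) with hL
  have hLpos : 0 < L := by
    have := Real.log_neg h0 h1
    simp only [hL]; linarith
  have habs : ∀ z : ℂ, -Real.log (‖z‖) = (-(2:ℝ)⁻¹) * Real.log (Complex.normSq z) := by
    intro z
    rw [Complex.norm_def, Real.log_sqrt (Complex.normSq_nonneg z)]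
    ring
  set DN : ℂ →L[ℝ] ℝ :=
    (w.re • Complex.reCLM + w.re • Complex.reCLM) + (w.im • Complex.imCLM + w.im • Complex.imCLM) with hDN
  have hre : HasFDerivAt (fun z : ℂ => z.re) Complex.reCLM w := Complex.reCLM.hasFDerivAt
  have him : HasFDerivAt (fun z : ℂ => z.im) Complex.imCLM w := Complex.imCLM.hasFDerivAt
  have hN : HasFDerivAt Complex.normSq DN w := by
    have := ((hre.mul hre).add (him.mul him))
    rw [show (⇑Complex.normSq : ℂ → ℝ) = fun z => z.re * z.re + z.im * z.im from
      funext Complex.normSq_apply]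
    exact this
  have hlog : HasFDerivAt (fun z : ℂ => (-(2:ℝ)⁻¹) * Real.log (Complex.normSq z))
      ((-(2:ℝ)⁻¹) • (n⁻¹ • DN)) w :=
    (((Real.hasDerivAt_log hnpos.ne').comp_hasFDerivAt w hN).const_mul _)
  set k : ℝ := (1/3 : ℝ) * L ^ ((1:ℝ)/3 - 1) with hk
  have hrpow : HasDerivAt (fun x : ℝ => x ^ ((1:ℝ)/3)) k L := by
    simpa [hk] using Real.hasDerivAt_rpow_const (p := (1:ℝ)/3) (Or.inl hLpos.ne')
  have hLz : (-(2:ℝ)⁻¹) * Real.log (Complex.normSq w) = L := (habs w).symm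
  have hg : HasFDerivAt (fun z : ℂ => (-Real.log (‖z‖)) ^ ((1:ℝ)/3))
      (k • ((-(2:ℝ)⁻¹) • (n⁻¹ • DN))) w := by
    have h2 := (hLz ▸ hrpow).comp_hasFDerivAt w hlog
    have hfun : (fun z : ℂ => (-Real.log (‖z‖)) ^ ((1:ℝ)/3))
        = (fun x : ℝ => x ^ ((1:ℝ)/3)) ∘ (fun z : ℂ => (-(2:ℝ)⁻¹) * Real.log (Complex.normSq z)) := by
      funext z; simp [Function.comp, habs z]
    rw [hfun]; exact h2
  set g : ℝ := L ^ ((1:ℝ)/3) with hgdef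
  have hconj : HasFDerivAt (fun z : ℂ => (starRingEnd ℂ) z) (Complex.conjCLE : ℂ →L[ℝ] ℂ) w :=
    Complex.conjCLE.hasFDerivAt
  have hgC : HasFDerivAt (fun z : ℂ => (((-Real.log (‖z‖)) ^ ((1:ℝ)/3) : ℝ) : ℂ))
      (Complex.ofRealCLM.comp (k • ((-(2:ℝ)⁻¹) • (n⁻¹ • DN)))) w :=
    Complex.ofRealCLM.hasFDerivAt.comp w hg
  have hf : HasFDerivAt f15
      ((starRingEnd ℂ) w • (Complex.ofRealCLM.comp (k • ((-(2:ℝ)⁻¹) • (n⁻¹ • DN))))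
        + (((-Real.log (‖w‖)) ^ ((1:ℝ)/3) : ℝ) : ℂ) • (Complex.conjCLE : ℂ →L[ℝ] ℂ)) w :=
    hconj.mul hgC
  have hfd := hf.fderiv
  have he1 : fderiv ℝ f15 w 1
      = (starRingEnd ℂ) w * ((k * (-(2:ℝ)⁻¹ * (n⁻¹ * (w.re * 1 + w.re * 1 + (w.im * 0 + w.im * 0)))) : ℝ) : ℂ)
        + (g : ℂ) * (starRingEnd ℂ) 1 := by
    rw [hfd]
    simp only [ContinuousLinearMap.add_apply, ContinuousLinearMap.coe_smul', Pi.smul_apply,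
      ContinuousLinearMap.coe_comp', Function.comp_apply, Complex.ofRealCLM_apply,
      ContinuousLinearEquiv.coe_coe, Complex.conjCLE_apply, hDN,
      Complex.reCLM_apply, Complex.imCLM_apply, Complex.one_re, Complex.one_im,
      smul_eq_mul, Complex.real_smul, hgdef, hL]
  have heI : fderiv ℝ f15 w Complex.I
      = (starRingEnd ℂ) w * ((k * (-(2:ℝ)⁻¹ * (n⁻¹ * (w.re * 0 + w.re * 0 + (w.im * 1 + w.im * 1)))) : ℝ) : ℂ)
        + (g : ℂ) * (starRingEnd ℂ) Complex.I := by
    rw [hfd]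
    simp only [ContinuousLinearMap.add_apply, ContinuousLinearMap.coe_smul', Pi.smul_apply,
      ContinuousLinearMap.coe_comp', Function.comp_apply, Complex.ofRealCLM_apply,
      ContinuousLinearEquiv.coe_coe, Complex.conjCLE_apply, hDN,
      Complex.reCLM_apply, Complex.imCLM_apply, Complex.I_re, Complex.I_im,
      smul_eq_mul, Complex.real_smul, hgdef, hL]
  set K : ℝ := L ^ (-(2:ℝ)/3) with hK
  have hkK : k = (1/3) * K := by rw [hk, hK]; norm_num
  have hwc : (starRingEnd ℂ) w = (w.re : ℂ) - (w.im : ℂ) * Complex.I := by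
    simp [Complex.ext_iff]
  have hww : ((n : ℝ) : ℂ) = w * (starRingEnd ℂ) w := by
    rw [hn]; exact (Complex.mul_conj w).symm
  have hnne : (n : ℝ) ≠ 0 := hnpos.ne'
  have hnC : ((n : ℝ) : ℂ) ≠ 0 := by exact_mod_cast hnne
  have hcwne : (starRingEnd ℂ) w ≠ 0 := by simpa using hw
  have hnre : ((w.re : ℂ)^2 + (w.im : ℂ)^2) = ((n : ℝ) : ℂ) := by
    have : n = w.re^2 + w.im^2 := by rw [hn, Complex.normSq_apply]; ring
    rw [this]; push_cast; ring
  have h2 : fderiv ℝ f15 w 1 - Complex.I * fderiv ℝ f15 w Complex.I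
      = -(k : ℂ) * (((n:ℝ):ℂ))⁻¹ * ((starRingEnd ℂ) w)^2 := by
    rw [he1, heI, map_one, Complex.conj_I, hwc]
    push_cast
    ring_nf
    simp only [Complex.I_sq]
    ring
  have h3 : ((starRingEnd ℂ) w)^2 * (((n:ℝ):ℂ))⁻¹ = (starRingEnd ℂ) w / w := by
    rw [hww]
    field_simp
  have goal1 : (1/2 : ℂ) * (fderiv ℝ f15 w 1 - Complex.I * fderiv ℝ f15 w Complex.I)
      = -(1/6 : ℂ) * (K : ℂ) * ((starRingEnd ℂ) w / w) := by
    rw [h2, hkK]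
    push_cast
    linear_combination (-(1/6 : ℂ) * (K:ℂ)) * h3
  have h5 : fderiv ℝ f15 w 1 + Complex.I * fderiv ℝ f15 w Complex.I
      = -(k : ℂ) * ((((n:ℝ):ℂ))⁻¹ * ((w.re : ℂ)^2 + (w.im : ℂ)^2)) + 2*(g : ℂ) := by
    rw [he1, heI, map_one, Complex.conj_I, hwc]
    push_cast
    ring_nf
    simp only [Complex.I_sq]
    ring
  have goal2 : (1/2 : ℂ) * (fderiv ℝ f15 w 1 + Complex.I * fderiv ℝ f15 w Complex.I)
      = (g : ℂ) - (1/6 : ℂ) * (K : ℂ) := by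
    rw [h5, hnre, inv_mul_cancel₀ hnC, hkK]
    push_cast
    ring
  exact ⟨hf.differentiableAt, goal1, goal2⟩

/-- Wirtinger derivatives of `f(w) = w̄(-log|w|)^{1/3}` on `{0 < |w| < 1}`:
`∂_w f = -(1/6)(-log|w|)^{-2/3}·(w̄/w)` and
`∂_w̄ f = (-log|w|)^{1/3} - (1/6)(-log|w|)^{-2/3}`; in particular `∂_w f` is bounded
near `w = 0` while `∂_w̄ f → ∞` as `w → 0`. -/
theorem stmt15 :
    (∀ w : ℂ, 0 < ‖w‖ → ‖w‖ < 1 →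
      DifferentiableAt ℝ f15 w ∧
      wirtDw f15 w
        = -(1 / 6 : ℂ) * (((-Real.log (‖w‖)) ^ (-(2 : ℝ) / 3) : ℝ) : ℂ)
            * ((starRingEnd ℂ) w / w) ∧
      wirtDwBar f15 w
        = (((-Real.log (‖w‖)) ^ ((1 : ℝ) / 3) : ℝ) : ℂ)
            - (1 / 6 : ℂ) * (((-Real.log (‖w‖)) ^ (-(2 : ℝ) / 3) : ℝ) : ℂ)) ∧
    (∃ C : ℝ, ∀ᶠ w in nhdsWithin (0 : ℂ) {w : ℂ | w ≠ 0}, ‖wirtDw f15 w‖ ≤ C) ∧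
    Tendsto (fun w : ℂ => ‖wirtDwBar f15 w‖) (nhdsWithin (0 : ℂ) {w : ℂ | w ≠ 0}) atTop := by
  have he1 : Real.exp (-1) < 1 := by
    rw [Real.exp_lt_one_iff]; norm_num
  have hepos : (0:ℝ) < Real.exp (-1) := Real.exp_pos _
  refine ⟨fun w h0 h1 => aux15 h0 h1, ?_, ?_⟩
  · refine ⟨1/6, ?_⟩
    filter_upwards [self_mem_nhdsWithin,
      mem_nhdsWithin_of_mem_nhds (Metric.ball_mem_nhds (0:ℂ) hepos)] with w hwne hball
    have hwne' : w ≠ 0 := hwne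
    have h0 : 0 < ‖w‖ := norm_pos_iff.mpr hwne'
    have hlt : ‖w‖ < Real.exp (-1) := by
      simpa [Complex.dist_eq] using (Metric.mem_ball.mp hball)
    have h1 : ‖w‖ < 1 := hlt.trans he1
    have hL1 : (1:ℝ) ≤ -Real.log (‖w‖) := by
      have := Real.log_lt_log h0 hlt
      rw [Real.log_exp] at this
      linarith
    have hK1 : (-Real.log (‖w‖)) ^ (-(2:ℝ)/3) ≤ 1 :=
      Real.rpow_le_one_of_one_le_of_nonpos hL1 (by norm_num)
    have hK0 : (0:ℝ) ≤ (-Real.log (‖w‖)) ^ (-(2:ℝ)/3) :=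
      Real.rpow_nonneg (by linarith) _
    rw [(aux15 h0 h1).2.1]
    rw [norm_mul, norm_mul, norm_div]
    simp only [Complex.norm_conj, norm_neg]
    rw [div_self h0.ne']
    have : ‖(1:ℂ)/6‖ = 1/6 := by
      simp [map_div₀]
    rw [this]
    have : ‖(((-Real.log (‖w‖)) ^ (-(2:ℝ)/3) : ℝ) : ℂ)‖
        = (-Real.log (‖w‖)) ^ (-(2:ℝ)/3) := by
      rw [Complex.norm_real, Real.norm_eq_abs, abs_of_nonneg hK0]
    rw [this]
    nlinarith
  · have hA : Tendsto (fun w : ℂ => -Real.log (‖w‖))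
        (nhdsWithin (0:ℂ) {w : ℂ | w ≠ 0}) atTop := by
      have habs : Tendsto (fun w : ℂ => ‖w‖)
          (nhdsWithin (0:ℂ) {w : ℂ | w ≠ 0}) (nhdsWithin (0:ℝ) (Set.Ioi 0)) := by
        apply tendsto_nhdsWithin_of_tendsto_nhds_of_eventually_within
        · have := (continuous_norm.tendsto (0:ℂ))
          simpa using this.mono_left nhdsWithin_le_nhds
        · filter_upwards [self_mem_nhdsWithin] with w hw
          exact norm_pos_iff.mpr hw
      have hlog := Real.tendsto_log_nhdsGT_zero.comp habs
      exact tendsto_neg_atBot_atTop.comp hlog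
    have hG : Tendsto (fun L : ℝ => |L ^ ((1:ℝ)/3) - (1/6) * L ^ (-(2:ℝ)/3)|) atTop atTop := by
      apply tendsto_abs_atTop_atTop.comp
      have h1 : Tendsto (fun L : ℝ => L ^ ((1:ℝ)/3)) atTop atTop :=
        tendsto_rpow_atTop (by norm_num)
      have h2 : Tendsto (fun L : ℝ => -((1/6) * L ^ (-(2:ℝ)/3))) atTop (nhds (-(1/6 * 0))) := by
        apply Tendsto.neg
        apply Tendsto.const_mul
        have := tendsto_rpow_neg_atTop (y := (2:ℝ)/3) (by norm_num)
        simpa [neg_div] using this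
      have := h1.atTop_add h2
      simpa [sub_eq_add_neg] using this
    have key := hG.comp hA
    apply key.congr'
    filter_upwards [self_mem_nhdsWithin,
      mem_nhdsWithin_of_mem_nhds (Metric.ball_mem_nhds (0:ℂ) one_pos)] with w hwne hball
    have h0 : 0 < ‖w‖ := norm_pos_iff.mpr hwne
    have h1 : ‖w‖ < 1 := by
      simpa [Complex.dist_eq] using (Metric.mem_ball.mp hball)
    rw [Function.comp_apply]
    rw [(aux15 h0 h1).2.2]
    have : (((-Real.log (‖w‖)) ^ ((1:ℝ)/3) : ℝ) : ℂ)
        - (1/6 : ℂ) * (((-Real.log (‖w‖)) ^ (-(2:ℝ)/3) : ℝ) : ℂ)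
        = ((((-Real.log (‖w‖)) ^ ((1:ℝ)/3)
            - (1/6) * (-Real.log (‖w‖)) ^ (-(2:ℝ)/3) : ℝ)) : ℂ) := by
      push_cast; ring
    rw [this, Complex.norm_real, Real.norm_eq_abs]
end
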